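/- Space-like triangles in the de Sitter plane have total edge length strictly greater than 2π, and conversely: given l₁, l₂, l₃ ∈ (0,π) with l₁ + l₂ + l₃ > 2π, there exists a unique (up to isometry) space-like triangle in the de Sitter plane S²₁ with edge lengths l₁, l₂, l₃. -/

import Mathlib

set_option maxHeartbeats 2000000


noncomputable section

/-- The Minkowski bilinear form on `ℝ³` (signature `(-,+,+)`). -/
def mink (x y : Fin 3 → ℝ) : ℝ := -(x 0 * y 0) + x 1 * y 1 + x 2 * y 2

/-- Radial projection of a point of the positive half of the de Sitter quadric to the
projective model plane `{x₀ = 1}`, identified with the Euclidean plane. -/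
def dsProj (x : Fin 3 → ℝ) : EuclideanSpace ℝ (Fin 2) := WithLp.toLp 2 (fun j => x j.succ / x 0)

/-- A space-like triangle in the de Sitter plane `S²₁ = {⟨x,x⟩ = 1}`: three points of
the quadric, in the positive hemisphere, whose radial projections to the projective
model span a Euclidean triangle bounding an open convex set containing the closed unit
disk. -/
def IsSpacelikeTriangle (v : Fin 3 → Fin 3 → ℝ) : Prop :=
  (∀ i, mink (v i) (v i) = 1 ∧ 0 < v i 0) ∧
  Metric.closedBall (0 : EuclideanSpace ℝ (Fin 2)) 1 ⊆
    interior (convexHull ℝ (Set.range fun i => dsProj (v i)))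

/-- The length of the space-like geodesic edge joining two points of the de Sitter
plane. -/
def sLen (x y : Fin 3 → ℝ) : ℝ := Real.arccos (mink x y)

/-! ### Auxiliary material -/

private lemma normsq (x : EuclideanSpace ℝ (Fin 2)) : ‖x‖ ^ 2 = x 0 ^ 2 + x 1 ^ 2 := by
  rw [EuclideanSpace.norm_eq, Real.sq_sqrt (by positivity)]
  simp [Fin.sum_univ_two, Real.norm_eq_abs, sq_abs]

private def mkE (a b : ℝ) : EuclideanSpace ℝ (Fin 2) :=
  (WithLp.equiv 2 (Fin 2 → ℝ)).symm ![a, b]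

private lemma mkE_zero (a b : ℝ) : mkE a b 0 = a := rfl
private lemma mkE_one (a b : ℝ) : mkE a b 1 = b := rfl

/-- If all three projected points lie in a closed half-plane whose boundary passes
through a point of the closed unit disk, we contradict the disk being in the interior
of their convex hull. -/
private lemma halfspace_contra (p : Fin 3 → EuclideanSpace ℝ (Fin 2))
    (hsub : Metric.closedBall (0 : EuclideanSpace ℝ (Fin 2)) 1 ⊆
      interior (convexHull ℝ (Set.range p)))
    (n0 n1 z0 z1 : ℝ) (hn : 0 < n0 ^ 2 + n1 ^ 2) (hz : z0 ^ 2 + z1 ^ 2 ≤ 1)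
    (hle : ∀ i, n0 * p i 0 + n1 * p i 1 ≤ n0 * z0 + n1 * z1) : False := by
  have hlin : IsLinearMap ℝ (fun y : EuclideanSpace ℝ (Fin 2) => n0 * y 0 + n1 * y 1) := by
    constructor
    · intro a b
      have h0 : (a + b) 0 = a 0 + b 0 := rfl
      have h1 : (a + b) 1 = a 1 + b 1 := rfl
      simp only [h0, h1]; ring
    · intro c a
      have h0 : (c • a) 0 = c * a 0 := rfl
      have h1 : (c • a) 1 = c * a 1 := rfl
      simp only [h0, h1, smul_eq_mul]; ring
  have hhull : convexHull ℝ (Set.range p) ⊆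
      {y : EuclideanSpace ℝ (Fin 2) | n0 * y 0 + n1 * y 1 ≤ n0 * z0 + n1 * z1} :=
    convexHull_min (by rintro y ⟨i, rfl⟩; exact hle i) (convex_halfSpace_le hlin _)
  set z : EuclideanSpace ℝ (Fin 2) := mkE z0 z1 with hzdef
  have hzmem : z ∈ interior (convexHull ℝ (Set.range p)) := by
    apply hsub
    rw [mem_closedBall_zero_iff]
    have h2 : ‖z‖ ^ 2 ≤ 1 := by
      rw [normsq]
      simpa [hzdef, mkE_zero, mkE_one] using hz
    nlinarith [norm_nonneg z]
  obtain ⟨ε, hε, hball⟩ := Metric.isOpen_iff.1 isOpen_interior z hzmem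
  set n : EuclideanSpace ℝ (Fin 2) := mkE n0 n1 with hndef
  have hnsq : ‖n‖ ^ 2 = n0 ^ 2 + n1 ^ 2 := by
    rw [normsq]; simp [hndef, mkE_zero, mkE_one]
  have hnorm : 0 < ‖n‖ := by nlinarith [norm_nonneg n]
  set c : ℝ := ε / (2 * ‖n‖) with hcdef
  have hc : 0 < c := by positivity
  have hmem : z + c • n ∈ Metric.ball z ε := by
    rw [Metric.mem_ball, dist_eq_norm]
    have h1 : z + c • n - z = c • n := by abel
    rw [h1, norm_smul, Real.norm_eq_abs, abs_of_pos hc]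
    have h2 : c * ‖n‖ = ε / 2 := by
      rw [hcdef]; field_simp
    rw [h2]; linarith
  have hzc := hhull (interior_subset (hball hmem))
  have e0 : (z + c • n) 0 = z0 + c * n0 := rfl
  have e1 : (z + c • n) 1 = z1 + c * n1 := rfl
  rw [Set.mem_setOf_eq, e0, e1] at hzc
  nlinarith [hzc]

/-- Barycentric-coordinate membership criterion for the convex hull of three points. -/
private lemma mem_hull (p : Fin 3 → EuclideanSpace ℝ (Fin 2)) (x : EuclideanSpace ℝ (Fin 2))
    (h0 : 0 < (p 1 0 - x 0) * (p 2 1 - x 1) - (p 1 1 - x 1) * (p 2 0 - x 0))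
    (h1 : 0 < (p 2 0 - x 0) * (p 0 1 - x 1) - (p 2 1 - x 1) * (p 0 0 - x 0))
    (h2 : 0 < (p 0 0 - x 0) * (p 1 1 - x 1) - (p 0 1 - x 1) * (p 1 0 - x 0)) :
    x ∈ convexHull ℝ (Set.range p) := by
  set s0 := (p 1 0 - x 0) * (p 2 1 - x 1) - (p 1 1 - x 1) * (p 2 0 - x 0) with hs0
  set s1 := (p 2 0 - x 0) * (p 0 1 - x 1) - (p 2 1 - x 1) * (p 0 0 - x 0) with hs1
  set s2 := (p 0 0 - x 0) * (p 1 1 - x 1) - (p 0 1 - x 1) * (p 1 0 - x 0) with hs2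
  have hS : 0 < s0 + s1 + s2 := by linarith
  have hSne : s0 + s1 + s2 ≠ 0 := ne_of_gt hS
  have hmem := (convex_convexHull ℝ (Set.range p)).sum_mem (t := Finset.univ)
      (w := fun i => (![s0, s1, s2] i) / (s0 + s1 + s2)) (z := p)
      (fun i _ => by fin_cases i <;> · show (0:ℝ) ≤ _ / _; positivity)
      (by
        rw [Fin.sum_univ_three]
        show s0 / (s0 + s1 + s2) + s1 / (s0 + s1 + s2) + s2 / (s0 + s1 + s2) = 1
        field_simp)
      (fun i _ => subset_convexHull ℝ _ (Set.mem_range_self i))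
  have hxe : (∑ i : Fin 3, ((![s0, s1, s2] i) / (s0 + s1 + s2)) • p i) = x := by
    rw [Fin.sum_univ_three]
    refine PiLp.ext (fun j => ?_)
    show (s0 / (s0 + s1 + s2)) * p 0 j + (s1 / (s0 + s1 + s2)) * p 1 j
        + (s2 / (s0 + s1 + s2)) * p 2 j = x j
    fin_cases j <;> simp only [Fin.zero_eta, Fin.mk_one]
    · field_simp
      rw [hs0, hs1, hs2]
      ring
    · field_simp
      rw [hs0, hs1, hs2]
      ring
  rwa [hxe] at hmem

private lemma arccos_lt_pi' {x : ℝ} (h : -1 < x) : Real.arccos x < Real.pi :=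
  lt_of_le_of_ne (Real.arccos_le_pi x) fun he => absurd (Real.arccos_eq_pi.mp he) (by linarith)

private lemma arccos_anti {x y : ℝ} (h : x ≤ y) : Real.arccos y ≤ Real.arccos x := by
  rw [Real.arccos_eq_pi_div_two_sub_arcsin, Real.arccos_eq_pi_div_two_sub_arcsin]
  have := Real.monotone_arcsin h
  linarith

/-- Copositivity of the length Gram form when one edge dominates the sum of the others. -/
private lemma copos {a b f x y z : ℝ} (ha : -1 ≤ a) (hb1 : -1 ≤ b) (hb2 : b ≤ 1)
    (hf1 : -1 ≤ f) (hf2 : f ≤ 1) (hbf : 0 ≤ b + f)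
    (hx : 0 ≤ x) (hy : 0 ≤ y) (hz : 0 ≤ z) :
    0 ≤ x ^ 2 + y ^ 2 + z ^ 2 + 2 * a * x * y + 2 * b * y * z + 2 * f * x * z := by
  rcases le_total y x with h | h
  · nlinarith [sq_nonneg (x - y - z),
      mul_nonneg (mul_nonneg (by linarith : (0:ℝ) ≤ 1 + a) hx) hy,
      mul_nonneg (mul_nonneg hz (by linarith : (0:ℝ) ≤ x - y)) (by linarith : (0:ℝ) ≤ 1 - b),
      mul_nonneg (mul_nonneg hz hx) hbf]
  · nlinarith [sq_nonneg (y - x - z),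
      mul_nonneg (mul_nonneg (by linarith : (0:ℝ) ≤ 1 + a) hx) hy,
      mul_nonneg (mul_nonneg hz (by linarith : (0:ℝ) ≤ y - x)) (by linarith : (0:ℝ) ≤ 1 - f),
      mul_nonneg (mul_nonneg hz hy) hbf]

/-- Master geometric lemma: for a space-like triangle all pairwise Minkowski products
lie strictly between `-1` and `1`, the future timelike direction is a nonnegative
combination of the vertices, and the projected points are affinely independent. -/
private lemma master (v : Fin 3 → Fin 3 → ℝ) (hT : IsSpacelikeTriangle v) :
    ((mink (v 0) (v 1)) ^ 2 < 1 ∧ (mink (v 1) (v 2)) ^ 2 < 1 ∧ (mink (v 0) (v 2)) ^ 2 < 1) ∧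
    (∃ m : Fin 3 → ℝ, (∀ i, 0 ≤ m i) ∧
      m 0 * v 0 0 + m 1 * v 1 0 + m 2 * v 2 0 = 1 ∧
      m 0 * v 0 1 + m 1 * v 1 1 + m 2 * v 2 1 = 0 ∧
      m 0 * v 0 2 + m 1 * v 1 2 + m 2 * v 2 2 = 0) ∧
    (dsProj (v 1) 0 - dsProj (v 0) 0) * (dsProj (v 2) 1 - dsProj (v 0) 1) -
      (dsProj (v 1) 1 - dsProj (v 0) 1) * (dsProj (v 2) 0 - dsProj (v 0) 0) ≠ 0 := by
  obtain ⟨hq, hsub⟩ := hT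
  have ht : ∀ i, 0 < v i 0 := fun i => (hq i).2
  have htne : ∀ i, v i 0 ≠ 0 := fun i => ne_of_gt (ht i)
  have hQ : ∀ i, -(v i 0 * v i 0) + v i 1 * v i 1 + v i 2 * v i 2 = 1 := fun i => (hq i).1
  set p : Fin 3 → EuclideanSpace ℝ (Fin 2) := fun i => dsProj (v i) with hpdef
  have hp0 : ∀ i, p i 0 = v i 1 / v i 0 := fun i => rfl
  have hp1 : ∀ i, p i 1 = v i 2 / v i 0 := fun i => rfl
  have ea : ∀ i, p i 0 * v i 0 = v i 1 := fun i => by rw [hp0 i]; exact div_mul_cancel₀ _ (htne i)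
  have eb : ∀ i, p i 1 * v i 0 = v i 2 := fun i => by rw [hp1 i]; exact div_mul_cancel₀ _ (htne i)
  clear_value p
  -- the key algebraic identity
  have hkey : ∀ i j : Fin 3,
      (v i 1 * v j 2 - v i 2 * v j 1) ^ 2 -
        ((v j 0 * v i 1 - v i 0 * v j 1) ^ 2 + (v j 0 * v i 2 - v i 0 * v j 2) ^ 2) =
        1 - (mink (v i) (v j)) ^ 2 := by
    intro i j
    unfold mink
    linear_combination (-(v j 0 * v j 0) + v j 1 * v j 1 + v j 2 * v j 2) * hQ i + hQ j
  -- transfer to projected coordinates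
  have hXp : ∀ i j : Fin 3, (p i 0 * p j 1 - p i 1 * p j 0) * (v i 0 * v j 0) =
      v i 1 * v j 2 - v i 2 * v j 1 := by
    intro i j
    linear_combination (p j 1 * v j 0) * ea i + v i 1 * eb j - (p j 0 * v j 0) * eb i -
      v i 2 * ea j
  have he1 : ∀ i j : Fin 3, (p j 0 - p i 0) * (v i 0 * v j 0) =
      v j 1 * v i 0 - v i 1 * v j 0 := by
    intro i j
    linear_combination v i 0 * ea j - v j 0 * ea i
  have he2 : ∀ i j : Fin 3, (p j 1 - p i 1) * (v i 0 * v j 0) =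
      v j 2 * v i 0 - v i 2 * v j 0 := by
    intro i j
    linear_combination v i 0 * eb j - v j 0 * eb i
  have hXD : ∀ i j : Fin 3,
      ((p i 0 * p j 1 - p i 1 * p j 0) ^ 2 - ((p j 0 - p i 0) ^ 2 + (p j 1 - p i 1) ^ 2))
        * (v i 0 * v j 0) ^ 2 = 1 - (mink (v i) (v j)) ^ 2 := by
    intro i j
    linear_combination
      ((p i 0 * p j 1 - p i 1 * p j 0) * (v i 0 * v j 0) + (v i 1 * v j 2 - v i 2 * v j 1)) *
        hXp i j -
      ((p j 0 - p i 0) * (v i 0 * v j 0) + (v j 1 * v i 0 - v i 1 * v j 0)) * he1 i j -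
      ((p j 1 - p i 1) * (v i 0 * v j 0) + (v j 2 * v i 0 - v i 2 * v j 0)) * he2 i j +
      hkey i j
  -- |mink| < 1 for each pair
  have hpair : ∀ i j k : Fin 3, (∀ m : Fin 3, m = i ∨ m = j ∨ m = k) →
      (mink (v i) (v j)) ^ 2 < 1 := by
    intro i j k hcov
    by_contra hcon
    push_neg at hcon
    have hXpD : (p i 0 * p j 1 - p i 1 * p j 0) ^ 2 ≤
        (p j 0 - p i 0) ^ 2 + (p j 1 - p i 1) ^ 2 := by
      by_contra hgt
      push_neg at hgt
      have h1 := hXD i j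
      have h2 : 0 < (v i 0 * v j 0) ^ 2 := pow_pos (mul_pos (ht i) (ht j)) 2
      nlinarith [h1, hcon, h2, mul_pos (sub_pos.2 hgt) h2]
    rcases eq_or_lt_of_le (by positivity : (0:ℝ) ≤ (p j 0 - p i 0) ^ 2 + (p j 1 - p i 1) ^ 2)
      with hD | hD
    · -- degenerate: p i = p j
      have hji0 : p j 0 = p i 0 := by
        nlinarith [sq_nonneg (p j 0 - p i 0), sq_nonneg (p j 1 - p i 1)]
      have hji1 : p j 1 = p i 1 := by
        nlinarith [sq_nonneg (p j 0 - p i 0), sq_nonneg (p j 1 - p i 1)]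
      have hnorm : 1 < p i 0 ^ 2 + p i 1 ^ 2 := by
        rw [hp0 i, hp1 i, div_pow, div_pow, ← add_div,
          lt_div_iff₀ (pow_pos (ht i) 2)]
        nlinarith [hQ i, ht i]
      rcases eq_or_lt_of_le (by positivity : (0:ℝ) ≤ (p k 0 - p i 0) ^ 2 + (p k 1 - p i 1) ^ 2)
        with hK | hK
      · have hk0 : p k 0 = p i 0 := by
          nlinarith [sq_nonneg (p k 0 - p i 0), sq_nonneg (p k 1 - p i 1)]
        have hk1 : p k 1 = p i 1 := by
          nlinarith [sq_nonneg (p k 0 - p i 0), sq_nonneg (p k 1 - p i 1)]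
        refine halfspace_contra p hsub (-(p i 0)) (-(p i 1)) 0 0 (by nlinarith) (by norm_num) ?_
        intro m
        rcases hcov m with h | h | h <;> rw [h]
        · nlinarith [sq_nonneg (p i 0), sq_nonneg (p i 1)]
        · rw [hji0, hji1]; nlinarith [sq_nonneg (p i 0), sq_nonneg (p i 1)]
        · rw [hk0, hk1]; nlinarith [sq_nonneg (p i 0), sq_nonneg (p i 1)]
      · rcases le_or_gt ((-(p k 1 - p i 1)) * p i 0 + (p k 0 - p i 0) * p i 1) 0 with hsgn | hsgn
        · refine halfspace_contra p hsub (-(p k 1 - p i 1)) (p k 0 - p i 0) 0 0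
            (by nlinarith [hK]) (by norm_num) ?_
          intro m
          rcases hcov m with h | h | h <;> rw [h]
          · nlinarith [hsgn]
          · rw [hji0, hji1]; nlinarith [hsgn]
          · nlinarith [hsgn]
        · refine halfspace_contra p hsub (p k 1 - p i 1) (-(p k 0 - p i 0)) 0 0
            (by nlinarith [hK]) (by norm_num) ?_
          intro m
          rcases hcov m with h | h | h <;> rw [h]
          · nlinarith [hsgn]
          · rw [hji0, hji1]; nlinarith [hsgn]
          · nlinarith [hsgn]
    · -- nondegenerate: use the foot of the perpendicular from the origin
      have hDne : (p j 0 - p i 0) ^ 2 + (p j 1 - p i 1) ^ 2 ≠ 0 := ne_of_gt hD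
      set s : ℝ := -((p i 0) * (p j 0 - p i 0) + (p i 1) * (p j 1 - p i 1)) /
        ((p j 0 - p i 0) ^ 2 + (p j 1 - p i 1) ^ 2) with hsdef
      set z0 : ℝ := p i 0 + s * (p j 0 - p i 0) with hz0def
      set z1 : ℝ := p i 1 + s * (p j 1 - p i 1) with hz1def
      have hid : (z0 ^ 2 + z1 ^ 2) * ((p j 0 - p i 0) ^ 2 + (p j 1 - p i 1) ^ 2) =
          (p i 0 * p j 1 - p i 1 * p j 0) ^ 2 := by
        rw [hz0def, hz1def, hsdef]
        field_simp
        ring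
      have hzsq : z0 ^ 2 + z1 ^ 2 ≤ 1 := by nlinarith [hXpD, hD, hid]
      rcases le_or_gt ((-(p j 1 - p i 1)) * (p k 0 - p i 0) + (p j 0 - p i 0) * (p k 1 - p i 1)) 0
        with he | he
      · refine halfspace_contra p hsub (-(p j 1 - p i 1)) (p j 0 - p i 0) z0 z1
          (by nlinarith [hD]) hzsq ?_
        have hRHS : (-(p j 1 - p i 1)) * z0 + (p j 0 - p i 0) * z1 =
            (-(p j 1 - p i 1)) * p i 0 + (p j 0 - p i 0) * p i 1 := by
          rw [hz0def, hz1def]; ring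
        intro m
        rw [hRHS]
        rcases hcov m with h | h | h <;> rw [h] <;> nlinarith [he]
      · refine halfspace_contra p hsub (p j 1 - p i 1) (-(p j 0 - p i 0)) z0 z1
          (by nlinarith [hD]) hzsq ?_
        have hRHS : (p j 1 - p i 1) * z0 + (-(p j 0 - p i 0)) * z1 =
            (p j 1 - p i 1) * p i 0 + (-(p j 0 - p i 0)) * p i 1 := by
          rw [hz0def, hz1def]; ring
        intro m
        rw [hRHS]
        rcases hcov m with h | h | h <;> rw [h] <;> nlinarith [he]
  have hc01 := hpair 0 1 2 (by decide)
  have hc12 := hpair 1 2 0 (by decide)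
  have hc02 := hpair 0 2 1 (by decide)
  -- orientation/sign facts for each cyclic pair
  have hside : ∀ i j k : Fin 3, (∀ m : Fin 3, m = i ∨ m = j ∨ m = k) →
      (mink (v i) (v j)) ^ 2 < 1 →
      0 < (p i 0 * p j 1 - p i 1 * p j 0) *
        ((p j 0 - p i 0) * (p k 1 - p i 1) - (p j 1 - p i 1) * (p k 0 - p i 0)) := by
    intro i j k hcov hlt
    have hXgtD : (p j 0 - p i 0) ^ 2 + (p j 1 - p i 1) ^ 2 <
        (p i 0 * p j 1 - p i 1 * p j 0) ^ 2 := by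
      by_contra hng
      push_neg at hng
      have h1 := hXD i j
      have h2 : 0 < (v i 0 * v j 0) ^ 2 := pow_pos (mul_pos (ht i) (ht j)) 2
      nlinarith [h1, hlt, mul_nonneg (sub_nonneg.2 hng) h2.le]
    have hDpos : 0 < (p j 0 - p i 0) ^ 2 + (p j 1 - p i 1) ^ 2 := by
      rcases eq_or_lt_of_le (by positivity : (0:ℝ) ≤ (p j 0 - p i 0) ^ 2 + (p j 1 - p i 1) ^ 2)
        with hD | hD
      · exfalso
        have hji0 : p j 0 = p i 0 := by
          nlinarith [sq_nonneg (p j 0 - p i 0), sq_nonneg (p j 1 - p i 1)]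
        have hji1 : p j 1 = p i 1 := by
          nlinarith [sq_nonneg (p j 0 - p i 0), sq_nonneg (p j 1 - p i 1)]
        rw [hji0, hji1] at hXgtD
        nlinarith [hXgtD]
      · exact hD
    rcases lt_trichotomy ((p i 0 * p j 1 - p i 1 * p j 0) *
        ((p j 0 - p i 0) * (p k 1 - p i 1) - (p j 1 - p i 1) * (p k 0 - p i 0))) 0
      with hneg | heq | hpos
    · exfalso
      rcases lt_trichotomy (p i 0 * p j 1 - p i 1 * p j 0) 0 with hX | hX | hX
      · have hΔ : 0 < (p j 0 - p i 0) * (p k 1 - p i 1) - (p j 1 - p i 1) * (p k 0 - p i 0) := by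
          by_contra hcon2
          push_neg at hcon2
          nlinarith [mul_nonneg (neg_nonneg.2 hX.le) (neg_nonneg.2 hcon2)]
        refine halfspace_contra p hsub (p j 1 - p i 1) (-(p j 0 - p i 0)) 0 0
          (by nlinarith [hDpos]) (by norm_num) ?_
        intro m
        rcases hcov m with h | h | h <;> rw [h]
        · nlinarith [hX]
        · nlinarith [hX]
        · nlinarith [hX, hΔ]
      · rw [hX, zero_mul] at hneg; exact lt_irrefl _ hneg
      · have hΔ : (p j 0 - p i 0) * (p k 1 - p i 1) - (p j 1 - p i 1) * (p k 0 - p i 0) < 0 := by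
          by_contra hcon2
          push_neg at hcon2
          nlinarith [mul_nonneg hX.le hcon2]
        refine halfspace_contra p hsub (-(p j 1 - p i 1)) (p j 0 - p i 0) 0 0
          (by nlinarith [hDpos]) (by norm_num) ?_
        intro m
        rcases hcov m with h | h | h <;> rw [h]
        · nlinarith [hX]
        · nlinarith [hX]
        · nlinarith [hX, hΔ]
    · exfalso
      have hXne : p i 0 * p j 1 - p i 1 * p j 0 ≠ 0 := by
        intro h; rw [h] at hXgtD; nlinarith [hDpos]
      have hΔ0 : (p j 0 - p i 0) * (p k 1 - p i 1) - (p j 1 - p i 1) * (p k 0 - p i 0) = 0 := by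
        rcases mul_eq_zero.mp heq with h | h
        · exact absurd h hXne
        · exact h
      rcases lt_trichotomy (p i 0 * p j 1 - p i 1 * p j 0) 0 with hX | hX | hX
      · refine halfspace_contra p hsub (p j 1 - p i 1) (-(p j 0 - p i 0)) 0 0
          (by nlinarith [hDpos]) (by norm_num) ?_
        intro m
        rcases hcov m with h | h | h <;> rw [h]
        · nlinarith [hX]
        · nlinarith [hX]
        · nlinarith [hX, hΔ0]
      · exact absurd hX hXne
      · refine halfspace_contra p hsub (-(p j 1 - p i 1)) (p j 0 - p i 0) 0 0
          (by nlinarith [hDpos]) (by norm_num) ?_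
        intro m
        rcases hcov m with h | h | h <;> rw [h]
        · nlinarith [hX]
        · nlinarith [hX]
        · nlinarith [hX, hΔ0]
    · exact hpos
  have hc20 : (mink (v 2) (v 0)) ^ 2 < 1 := by
    have hcomm : mink (v 2) (v 0) = mink (v 0) (v 2) := by unfold mink; ring
    rw [hcomm]; exact hc02
  have hS01 := hside 0 1 2 (by decide) hc01
  have hS12 := hside 1 2 0 (by decide) hc12
  have hS20 := hside 2 0 1 (by decide) hc20
  -- all three cyclic determinants coincide with Δ
  have e12 : (p 2 0 - p 1 0) * (p 0 1 - p 1 1) - (p 2 1 - p 1 1) * (p 0 0 - p 1 0) =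
      (p 1 0 - p 0 0) * (p 2 1 - p 0 1) - (p 1 1 - p 0 1) * (p 2 0 - p 0 0) := by ring
  have e20 : (p 0 0 - p 2 0) * (p 1 1 - p 2 1) - (p 0 1 - p 2 1) * (p 1 0 - p 2 0) =
      (p 1 0 - p 0 0) * (p 2 1 - p 0 1) - (p 1 1 - p 0 1) * (p 2 0 - p 0 0) := by ring
  rw [e12] at hS12
  rw [e20] at hS20
  set Δ : ℝ := (p 1 0 - p 0 0) * (p 2 1 - p 0 1) - (p 1 1 - p 0 1) * (p 2 0 - p 0 0) with hΔdef
  have hΔne : Δ ≠ 0 := by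
    intro h; rw [h, mul_zero] at hS01; exact lt_irrefl _ hS01
  have hpa : ∀ a, dsProj (v a) = p a := fun a => by rw [hpdef]
  simp only [hpa]
  rw [hΔdef] at hΔne
  refine ⟨⟨hc01, hc12, hc02⟩, ?_, hΔne⟩
  -- construct the nonnegative combination
  set X0 : ℝ := p 1 0 * p 2 1 - p 1 1 * p 2 0 with hX0def
  set X1 : ℝ := p 2 0 * p 0 1 - p 2 1 * p 0 0 with hX1def
  set X2 : ℝ := p 0 0 * p 1 1 - p 0 1 * p 1 0 with hX2def
  have hμ0 : 0 ≤ X0 / Δ := by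
    have h : X0 / Δ = (X0 * Δ) / Δ ^ 2 := by field_simp
    rw [h]; positivity
  have hμ1 : 0 ≤ X1 / Δ := by
    have h : X1 / Δ = (X1 * Δ) / Δ ^ 2 := by field_simp
    rw [h]; positivity
  have hμ2 : 0 ≤ X2 / Δ := by
    have h : X2 / Δ = (X2 * Δ) / Δ ^ 2 := by field_simp
    rw [h]; positivity
  have k0 : X0 / Δ + X1 / Δ + X2 / Δ = 1 := by
    rw [hX0def, hX1def, hX2def, hΔdef]; field_simp; ring
  have k1 : (X0 / Δ) * p 0 0 + (X1 / Δ) * p 1 0 + (X2 / Δ) * p 2 0 = 0 := by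
    rw [hX0def, hX1def, hX2def, hΔdef]; field_simp; ring
  have k2 : (X0 / Δ) * p 0 1 + (X1 / Δ) * p 1 1 + (X2 / Δ) * p 2 1 = 0 := by
    rw [hX0def, hX1def, hX2def, hΔdef]; field_simp; ring
  refine ⟨![X0 / Δ / v 0 0, X1 / Δ / v 1 0, X2 / Δ / v 2 0], ?_, ?_, ?_, ?_⟩
  · intro i
    fin_cases i
    · exact div_nonneg hμ0 (ht 0).le
    · exact div_nonneg hμ1 (ht 1).le
    · exact div_nonneg hμ2 (ht 2).le
  · show X0 / Δ / v 0 0 * v 0 0 + X1 / Δ / v 1 0 * v 1 0 + X2 / Δ / v 2 0 * v 2 0 = 1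
    rw [div_mul_cancel₀ _ (htne 0), div_mul_cancel₀ _ (htne 1), div_mul_cancel₀ _ (htne 2)]
    exact k0
  · show X0 / Δ / v 0 0 * v 0 1 + X1 / Δ / v 1 0 * v 1 1 + X2 / Δ / v 2 0 * v 2 1 = 0
    have e : ∀ i c, c / v i 0 * v i 1 = c * p i 0 := by
      intro i c; rw [hp0]; field_simp
    rw [e 0, e 1, e 2]
    exact k1
  · show X0 / Δ / v 0 0 * v 0 2 + X1 / Δ / v 1 0 * v 1 2 + X2 / Δ / v 2 0 * v 2 2 = 0
    have e : ∀ i c, c / v i 0 * v i 2 = c * p i 1 := by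
      intro i c; rw [hp1]; field_simp
    rw [e 0, e 1, e 2]
    exact k2


/-- positivity of a triangle side functional on a ball, scalar form. -/
private lemma side_pos {X D Q Qm x0 x1 d0 d1 : ℝ} (hX : 0 < X) (hXQ : X ^ 2 = Q * D)
    (hQm : Qm ≤ Q) (hx : x0 ^ 2 + x1 ^ 2 < Qm) (hD : D = d0 ^ 2 + d1 ^ 2) :
    0 < X + (d0 * x1 - d1 * x0) := by
  have hD0 : 0 ≤ D := by rw [hD]; positivity
  have hDpos : 0 < D := by
    rcases eq_or_lt_of_le hD0 with h | h
    · exfalso; nlinarith [hXQ, hX]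
    · exact h
  have hcs : (d0 * x1 - d1 * x0) ^ 2 ≤ D * (x0 ^ 2 + x1 ^ 2) := by
    rw [hD]; nlinarith [sq_nonneg (d0 * x0 + d1 * x1)]
  by_contra hcon
  push_neg at hcon
  have h1 : X ^ 2 ≤ (d0 * x1 - d1 * x0) ^ 2 := by
    nlinarith [hX, hcon, sq_nonneg (d0 * x1 - d1 * x0 + X)]
  have h2 : D * (x0 ^ 2 + x1 ^ 2) < D * Qm := mul_lt_mul_of_pos_left hx hDpos
  have h3 : D * Qm ≤ D * Q := mul_le_mul_of_nonneg_left hQm hD0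
  nlinarith [hXQ, h1, hcs, h2, h3]

/-- Part 1: the edge-length sum of a space-like triangle exceeds `2π`. -/
private lemma part1 (v : Fin 3 → Fin 3 → ℝ) (hT : IsSpacelikeTriangle v) :
    2 * Real.pi < sLen (v 0) (v 1) + sLen (v 1) (v 2) + sLen (v 0) (v 2) := by
  obtain ⟨⟨hc01, hc12, hc02⟩, ⟨m, hm, he0, he1, he2⟩, -⟩ := master v hT
  have hq : ∀ i, mink (v i) (v i) = 1 := fun i => (hT.1 i).1
  by_contra hle
  push_neg at hle
  have hQm : m 0 ^ 2 * mink (v 0) (v 0) + m 1 ^ 2 * mink (v 1) (v 1) +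
      m 2 ^ 2 * mink (v 2) (v 2) + 2 * (m 0 * m 1) * mink (v 0) (v 1) +
      2 * (m 1 * m 2) * mink (v 1) (v 2) + 2 * (m 0 * m 2) * mink (v 0) (v 2) = -1 := by
    unfold mink
    linear_combination (-(m 0 * v 0 0 + m 1 * v 1 0 + m 2 * v 2 0) - 1) * he0 +
      (m 0 * v 0 1 + m 1 * v 1 1 + m 2 * v 2 1) * he1 +
      (m 0 * v 0 2 + m 1 * v 1 2 + m 2 * v 2 2) * he2
  rw [hq 0, hq 1, hq 2] at hQm
  have hb01 : -1 < mink (v 0) (v 1) ∧ mink (v 0) (v 1) < 1 :=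
    ⟨by nlinarith [hc01], by nlinarith [hc01]⟩
  have hb12 : -1 < mink (v 1) (v 2) ∧ mink (v 1) (v 2) < 1 :=
    ⟨by nlinarith [hc12], by nlinarith [hc12]⟩
  have hb02 : -1 < mink (v 0) (v 2) ∧ mink (v 0) (v 2) < 1 :=
    ⟨by nlinarith [hc02], by nlinarith [hc02]⟩
  have hcos01 : Real.cos (sLen (v 0) (v 1)) = mink (v 0) (v 1) :=
    Real.cos_arccos hb01.1.le hb01.2.le
  have hcos12 : Real.cos (sLen (v 1) (v 2)) = mink (v 1) (v 2) :=
    Real.cos_arccos hb12.1.le hb12.2.le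
  have hcos02 : Real.cos (sLen (v 0) (v 2)) = mink (v 0) (v 2) :=
    Real.cos_arccos hb02.1.le hb02.2.le
  have h01p : 0 < sLen (v 0) (v 1) := Real.arccos_pos.2 hb01.2
  have h12p : 0 < sLen (v 1) (v 2) := Real.arccos_pos.2 hb12.2
  have h02p : 0 < sLen (v 0) (v 2) := Real.arccos_pos.2 hb02.2
  have h01pi : sLen (v 0) (v 1) < Real.pi := arccos_lt_pi' hb01.1
  have h12pi : sLen (v 1) (v 2) < Real.pi := arccos_lt_pi' hb12.1
  have h02pi : sLen (v 0) (v 2) < Real.pi := arccos_lt_pi' hb02.1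
  set la := sLen (v 0) (v 1) with hla
  set lb := sLen (v 1) (v 2) with hlb
  set lf := sLen (v 0) (v 2) with hlf
  rcases lt_or_ge (lb + lf) la with hbad | hg1
  · have h2 := Real.cos_le_cos_of_nonneg_of_le_pi h12p.le
      (by linarith : Real.pi - lf ≤ Real.pi) (by linarith : lb ≤ Real.pi - lf)
    rw [Real.cos_pi_sub, hcos02, hcos12] at h2
    have hcop := copos (a := mink (v 0) (v 1)) (b := mink (v 1) (v 2)) (f := mink (v 0) (v 2))
      (x := m 0) (y := m 1) (z := m 2) hb01.1.le hb12.1.le hb12.2.le hb02.1.le hb02.2.le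
      (by linarith) (hm 0) (hm 1) (hm 2)
    linarith [hQm, hcop]
  rcases lt_or_ge (la + lf) lb with hbad2 | hg2
  · have h2 := Real.cos_le_cos_of_nonneg_of_le_pi h01p.le
      (by linarith : Real.pi - lf ≤ Real.pi) (by linarith : la ≤ Real.pi - lf)
    rw [Real.cos_pi_sub, hcos02, hcos01] at h2
    have hcop := copos (a := mink (v 1) (v 2)) (b := mink (v 0) (v 2)) (f := mink (v 0) (v 1))
      (x := m 1) (y := m 2) (z := m 0) hb12.1.le hb02.1.le hb02.2.le hb01.1.le hb01.2.le
      (by linarith) (hm 1) (hm 2) (hm 0)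
    linarith [hQm, hcop]
  rcases lt_or_ge (la + lb) lf with hbad3 | hg3
  · have h2 := Real.cos_le_cos_of_nonneg_of_le_pi h01p.le
      (by linarith : Real.pi - lb ≤ Real.pi) (by linarith : la ≤ Real.pi - lb)
    rw [Real.cos_pi_sub, hcos12, hcos01] at h2
    have hcop := copos (a := mink (v 0) (v 2)) (b := mink (v 1) (v 2)) (f := mink (v 0) (v 1))
      (x := m 0) (y := m 2) (z := m 1) hb02.1.le hb12.1.le hb12.2.le hb01.1.le hb01.2.le
      (by linarith) (hm 0) (hm 2) (hm 1)
    linarith [hQm, hcop]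
  · -- main case: realize the Gram matrix spherically
    have hsa : 0 < Real.sin la := Real.sin_pos_of_pos_of_lt_pi h01p h01pi
    have hsf : 0 < Real.sin lf := Real.sin_pos_of_pos_of_lt_pi h02p h02pi
    have habs : |la - lf| ≤ lb := abs_sub_le_iff.2 ⟨by linarith, by linarith⟩
    have hub := Real.cos_le_cos_of_nonneg_of_le_pi (abs_nonneg (la - lf)) h12pi.le habs
    rw [Real.cos_abs, Real.cos_sub] at hub
    have hlbd : Real.cos la * Real.cos lf - Real.sin la * Real.sin lf ≤ Real.cos lb := by
      rcases le_or_gt (la + lf) Real.pi with hcase | hcase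
      · have h3 := Real.cos_le_cos_of_nonneg_of_le_pi h12p.le hcase (by linarith)
        rwa [Real.cos_add] at h3
      · have h3 := Real.cos_le_cos_of_nonneg_of_le_pi h12p.le
          (by linarith : 2 * Real.pi - (la + lf) ≤ Real.pi)
          (by linarith : lb ≤ 2 * Real.pi - (la + lf))
        rw [Real.cos_two_pi_sub, Real.cos_add] at h3
        exact h3
    set ca := Real.cos la with hcadef
    set cb := Real.cos lb with hcbdef
    set cf := Real.cos lf with hcfdef
    set sa := Real.sin la with hsadef
    set sf := Real.sin lf with hsfdef
    set cA := (cb - ca * cf) / (sa * sf) with hcAdef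
    have hprod : sa * sf * cA = cb - ca * cf := by
      rw [hcAdef]; field_simp
    have hcA2 : cA ^ 2 ≤ 1 := by
      have h4 : (cb - ca * cf) ^ 2 ≤ (sa * sf) ^ 2 :=
        sq_le_sq' (by linarith) (by linarith)
      rw [hcAdef, div_pow]
      exact div_le_one_of_le₀ h4 (by positivity)
    set sA := Real.sqrt (1 - cA ^ 2) with hsAdef
    have hsA2 : sA ^ 2 = 1 - cA ^ 2 := Real.sq_sqrt (by linarith)
    have hsa2 : sa ^ 2 = 1 - ca ^ 2 := Real.sin_sq la
    have hsf2 : sf ^ 2 = 1 - cf ^ 2 := Real.sin_sq lf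
    have hsos : m 0 ^ 2 + m 1 ^ 2 + m 2 ^ 2 + 2 * (m 0 * m 1) * ca + 2 * (m 1 * m 2) * cb +
        2 * (m 0 * m 2) * cf =
        (m 0 + ca * m 1 + cf * m 2) ^ 2 + (sa * m 1 + sf * cA * m 2) ^ 2 +
          (sf * sA * m 2) ^ 2 := by
      linear_combination (-(m 1 ^ 2)) * hsa2 - m 2 ^ 2 * hsf2 - m 2 ^ 2 * sf ^ 2 * hsA2 -
        2 * m 1 * m 2 * hprod
    rw [← hcos01, ← hcos12, ← hcos02] at hQm
    linarith [hQm, hsos, sq_nonneg (m 0 + ca * m 1 + cf * m 2),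
      sq_nonneg (sa * m 1 + sf * cA * m 2), sq_nonneg (sf * sA * m 2)]

/-- Part 2, existence. -/
private lemma existence (l₁ l₂ l₃ : ℝ) (h1 : l₁ ∈ Set.Ioo 0 Real.pi)
    (h2 : l₂ ∈ Set.Ioo 0 Real.pi) (h3 : l₃ ∈ Set.Ioo 0 Real.pi)
    (hsum : 2 * Real.pi < l₁ + l₂ + l₃) :
    ∃ v, IsSpacelikeTriangle v ∧
      sLen (v 0) (v 1) = l₁ ∧ sLen (v 1) (v 2) = l₂ ∧ sLen (v 0) (v 2) = l₃ := by
  obtain ⟨h1a, h1b⟩ := h1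
  obtain ⟨h2a, h2b⟩ := h2
  obtain ⟨h3a, h3b⟩ := h3
  have hcb : ∀ l : ℝ, 0 < l → l < Real.pi → -1 < Real.cos l ∧ Real.cos l < 1 := by
    intro l hl hlpi
    constructor
    · have h := Real.cos_lt_cos_of_nonneg_of_le_pi hl.le le_rfl hlpi
      rwa [Real.cos_pi] at h
    · have h := Real.cos_lt_cos_of_nonneg_of_le_pi le_rfl hlpi.le hl
      rwa [Real.cos_zero] at h
  set c1 := Real.cos l₁ with hc1def
  set c2 := Real.cos l₂ with hc2def
  set c3 := Real.cos l₃ with hc3def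
  have hb1 := hcb l₁ h1a h1b
  have hb2 := hcb l₂ h2a h2b
  have hb3 := hcb l₃ h3a h3b
  set F : ℝ → ℝ := fun d =>
    Real.arccos ((c1 + Real.sinh d ^ 2) / Real.cosh d ^ 2) +
    Real.arccos ((c2 + Real.sinh d ^ 2) / Real.cosh d ^ 2) +
    Real.arccos ((c3 + Real.sinh d ^ 2) / Real.cosh d ^ 2) with hFdef
  have hargc : ∀ c : ℝ, Continuous (fun d : ℝ => (c + Real.sinh d ^ 2) / Real.cosh d ^ 2) := by
    intro c
    exact (continuous_const.add (Real.continuous_sinh.pow 2)).div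
      (Real.continuous_cosh.pow 2) fun x => by positivity
  have hFcont : Continuous F := by
    rw [hFdef]
    exact ((Real.continuous_arccos.comp (hargc c1)).add
      (Real.continuous_arccos.comp (hargc c2))).add (Real.continuous_arccos.comp (hargc c3))
  have hF0 : F 0 = l₁ + l₂ + l₃ := by
    have e : F 0 = Real.arccos ((c1 + Real.sinh 0 ^ 2) / Real.cosh 0 ^ 2) +
        Real.arccos ((c2 + Real.sinh 0 ^ 2) / Real.cosh 0 ^ 2) +
        Real.arccos ((c3 + Real.sinh 0 ^ 2) / Real.cosh 0 ^ 2) := rfl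
    rw [e, Real.sinh_zero, Real.cosh_zero]
    norm_num
    rw [hc1def, hc2def, hc3def, Real.arccos_cos h1a.le h1b.le,
      Real.arccos_cos h2a.le h2b.le, Real.arccos_cos h3a.le h3b.le]
  have hsinh1 : 1 < Real.sinh 1 := Real.self_lt_sinh_iff.mpr (by norm_num)
  have hF1 : F 1 ≤ 2 * Real.pi := by
    have key : ∀ c : ℝ, -1 < c →
        Real.arccos ((c + Real.sinh 1 ^ 2) / Real.cosh 1 ^ 2) ≤ 2 * Real.pi / 3 := by
      intro c hc
      have hC : Real.cosh 1 ^ 2 = Real.sinh 1 ^ 2 + 1 := Real.cosh_sq 1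
      have harg : -(1 / 2) ≤ (c + Real.sinh 1 ^ 2) / Real.cosh 1 ^ 2 := by
        have hs2 : (1:ℝ) ≤ Real.sinh 1 ^ 2 := by
          have h' := mul_le_mul hsinh1.le hsinh1.le zero_le_one
            (by linarith : (0:ℝ) ≤ Real.sinh 1)
          rw [sq]; linarith
        rw [le_div_iff₀ (by positivity), hC]
        linarith
      have h23 : Real.arccos (-(1 / 2)) = 2 * Real.pi / 3 := by
        apply Real.arccos_eq_of_eq_cos (by positivity) (by linarith [Real.pi_pos])
        rw [show 2 * Real.pi / 3 = Real.pi - Real.pi / 3 by ring, Real.cos_pi_sub,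
          Real.cos_pi_div_three]
      calc Real.arccos ((c + Real.sinh 1 ^ 2) / Real.cosh 1 ^ 2)
          ≤ Real.arccos (-(1 / 2)) := arccos_anti harg
        _ = 2 * Real.pi / 3 := h23
    have e : F 1 = Real.arccos ((c1 + Real.sinh 1 ^ 2) / Real.cosh 1 ^ 2) +
        Real.arccos ((c2 + Real.sinh 1 ^ 2) / Real.cosh 1 ^ 2) +
        Real.arccos ((c3 + Real.sinh 1 ^ 2) / Real.cosh 1 ^ 2) := rfl
    rw [e]
    linarith [key c1 hb1.1, key c2 hb2.1, key c3 hb3.1]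
  obtain ⟨d, hdmem, hFd⟩ := intermediate_value_Icc' (by norm_num : (0:ℝ) ≤ 1)
    hFcont.continuousOn ⟨hF1, by linarith [hF0]⟩
  have hdpos : 0 < d := by
    rcases lt_or_eq_of_le hdmem.1 with h | h
    · exact h
    · exfalso; rw [← h, hF0] at hFd; linarith
  have hshp : 0 < Real.sinh d := Real.sinh_pos_iff.mpr hdpos
  have hθsum0 : Real.arccos ((c1 + Real.sinh d ^ 2) / Real.cosh d ^ 2) +
      Real.arccos ((c2 + Real.sinh d ^ 2) / Real.cosh d ^ 2) +
      Real.arccos ((c3 + Real.sinh d ^ 2) / Real.cosh d ^ 2) = 2 * Real.pi := hFd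
  set S := Real.sinh d ^ 2 with hSdef
  have hSpos : 0 < S := by rw [hSdef]; positivity
  have hC2 : Real.cosh d ^ 2 = S + 1 := by rw [hSdef]; exact Real.cosh_sq d
  have hC2pos : (0:ℝ) < Real.cosh d ^ 2 := by positivity
  have hargb : ∀ c : ℝ, -1 < c → c < 1 →
      -1 < (c + S) / Real.cosh d ^ 2 ∧ (c + S) / Real.cosh d ^ 2 < 1 := by
    intro c hcl hcr
    constructor
    · rw [lt_div_iff₀ hC2pos, hC2]; linarith
    · rw [div_lt_one hC2pos, hC2]; linarith
  have ha1 := hargb c1 hb1.1 hb1.2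
  have ha2 := hargb c2 hb2.1 hb2.2
  have ha3 := hargb c3 hb3.1 hb3.2
  set θ1 := Real.arccos ((c1 + S) / Real.cosh d ^ 2) with hθ1def
  set θ2 := Real.arccos ((c2 + S) / Real.cosh d ^ 2) with hθ2def
  set θ3 := Real.arccos ((c3 + S) / Real.cosh d ^ 2) with hθ3def
  have hθsum : θ1 + θ2 + θ3 = 2 * Real.pi := hθsum0
  have hθ1p : 0 < θ1 := Real.arccos_pos.2 ha1.2
  have hθ2p : 0 < θ2 := Real.arccos_pos.2 ha2.2
  have hθ3p : 0 < θ3 := Real.arccos_pos.2 ha3.2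
  have hθ1pi : θ1 < Real.pi := arccos_lt_pi' ha1.1
  have hθ2pi : θ2 < Real.pi := arccos_lt_pi' ha2.1
  have hθ3pi : θ3 < Real.pi := arccos_lt_pi' ha3.1
  have hcosθ1 : Real.cos θ1 = (c1 + S) / Real.cosh d ^ 2 :=
    Real.cos_arccos ha1.1.le ha1.2.le
  have hcosθ2 : Real.cos θ2 = (c2 + S) / Real.cosh d ^ 2 :=
    Real.cos_arccos ha2.1.le ha2.2.le
  have hcosθ3 : Real.cos θ3 = (c3 + S) / Real.cosh d ^ 2 :=
    Real.cos_arccos ha3.1.le ha3.2.le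
  have hsinθ1 : 0 < Real.sin θ1 := Real.sin_pos_of_pos_of_lt_pi hθ1p hθ1pi
  have hsinθ2 : 0 < Real.sin θ2 := Real.sin_pos_of_pos_of_lt_pi hθ2p hθ2pi
  have hsinθ3 : 0 < Real.sin θ3 := Real.sin_pos_of_pos_of_lt_pi hθ3p hθ3pi
  have hsum23 : θ1 + θ2 = 2 * Real.pi - θ3 := by linarith
  -- the triangle
  set v : Fin 3 → Fin 3 → ℝ := fun i =>
    ![Real.sinh d, Real.cosh d * Real.cos (![0, θ1, θ1 + θ2] i),
      Real.cosh d * Real.sin (![0, θ1, θ1 + θ2] i)] with hvdef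
  have hgen : ∀ α β c : ℝ,
      Real.cos α * Real.cos β + Real.sin α * Real.sin β = (c + S) / Real.cosh d ^ 2 →
      -(Real.sinh d * Real.sinh d) + (Real.cosh d * Real.cos α) * (Real.cosh d * Real.cos β) +
        (Real.cosh d * Real.sin α) * (Real.cosh d * Real.sin β) = c := by
    intro α β c h
    have hmul : Real.cosh d ^ 2 * ((c + S) / Real.cosh d ^ 2) = c + S := by field_simp
    have hS' : S = Real.sinh d ^ 2 := hSdef
    linear_combination (Real.cosh d ^ 2) * h + hmul + hS'
  have hdiag : ∀ i, mink (v i) (v i) = 1 := by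
    intro i
    have e : mink (v i) (v i) = -(Real.sinh d * Real.sinh d) +
        (Real.cosh d * Real.cos (![0, θ1, θ1 + θ2] i)) *
          (Real.cosh d * Real.cos (![0, θ1, θ1 + θ2] i)) +
        (Real.cosh d * Real.sin (![0, θ1, θ1 + θ2] i)) *
          (Real.cosh d * Real.sin (![0, θ1, θ1 + θ2] i)) := rfl
    rw [e]
    have hsc := Real.sin_sq_add_cos_sq (![0, θ1, θ1 + θ2] i)
    have hch := Real.cosh_sq_sub_sinh_sq d
    linear_combination (Real.cosh d ^ 2) * hsc + hch
  have hφ0 : (![(0:ℝ), θ1, θ1 + θ2]) 0 = 0 := rfl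
  have hφ1 : (![(0:ℝ), θ1, θ1 + θ2]) 1 = θ1 := rfl
  have hφ2 : (![(0:ℝ), θ1, θ1 + θ2]) 2 = θ1 + θ2 := rfl
  have hpair01 : mink (v 0) (v 1) = c1 := by
    have e : mink (v 0) (v 1) = -(Real.sinh d * Real.sinh d) +
        (Real.cosh d * Real.cos 0) * (Real.cosh d * Real.cos θ1) +
        (Real.cosh d * Real.sin 0) * (Real.cosh d * Real.sin θ1) := rfl
    rw [e]
    apply hgen
    rw [Real.cos_zero, Real.sin_zero, one_mul, zero_mul, add_zero]
    exact hcosθ1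
  have hpair12 : mink (v 1) (v 2) = c2 := by
    have e : mink (v 1) (v 2) = -(Real.sinh d * Real.sinh d) +
        (Real.cosh d * Real.cos θ1) * (Real.cosh d * Real.cos (θ1 + θ2)) +
        (Real.cosh d * Real.sin θ1) * (Real.cosh d * Real.sin (θ1 + θ2)) := rfl
    rw [e]
    apply hgen
    have h' := Real.cos_sub (θ1 + θ2) θ1
    rw [show θ1 + θ2 - θ1 = θ2 by ring] at h'
    rw [← hcosθ2]
    linear_combination -h'
  have hpair02 : mink (v 0) (v 2) = c3 := by
    have e : mink (v 0) (v 2) = -(Real.sinh d * Real.sinh d) +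
        (Real.cosh d * Real.cos 0) * (Real.cosh d * Real.cos (θ1 + θ2)) +
        (Real.cosh d * Real.sin 0) * (Real.cosh d * Real.sin (θ1 + θ2)) := rfl
    rw [e]
    apply hgen
    rw [Real.cos_zero, Real.sin_zero, one_mul, zero_mul, add_zero, hsum23,
      Real.cos_two_pi_sub]
    exact hcosθ3
  have hsl1 : sLen (v 0) (v 1) = l₁ := by
    show Real.arccos (mink (v 0) (v 1)) = l₁
    rw [hpair01, hc1def]
    exact Real.arccos_cos h1a.le h1b.le
  have hsl2 : sLen (v 1) (v 2) = l₂ := by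
    show Real.arccos (mink (v 1) (v 2)) = l₂
    rw [hpair12, hc2def]
    exact Real.arccos_cos h2a.le h2b.le
  have hsl3 : sLen (v 0) (v 2) = l₃ := by
    show Real.arccos (mink (v 0) (v 2)) = l₃
    rw [hpair02, hc3def]
    exact Real.arccos_cos h3a.le h3b.le
  -- the disk condition
  set p : Fin 3 → EuclideanSpace ℝ (Fin 2) := fun i => dsProj (v i) with hpdef
  set R := Real.cosh d / Real.sinh d with hRdef
  have hp0 : ∀ i, p i 0 = R * Real.cos (![0, θ1, θ1 + θ2] i) := by
    intro i
    show Real.cosh d * Real.cos (![0, θ1, θ1 + θ2] i) / Real.sinh d = _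
    rw [hRdef]; ring
  have hp1 : ∀ i, p i 1 = R * Real.sin (![0, θ1, θ1 + θ2] i) := by
    intro i
    show Real.cosh d * Real.sin (![0, θ1, θ1 + θ2] i) / Real.sinh d = _
    rw [hRdef]; ring
  have hv0pos : ∀ i : Fin 3, (0:ℝ) < v i 0 := fun i => hshp
  clear_value v p
  have hRsq : R ^ 2 = (S + 1) / S := by
    rw [hRdef, div_pow, hC2]
  have hRpos : 0 < R := by rw [hRdef]; positivity
  have hR1 : 1 < R := by
    rw [hRdef, lt_div_iff₀ hshp, one_mul]
    exact Real.sinh_lt_cosh d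
  -- cross products and chord lengths per pair
  have hX01 : p 0 0 * p 1 1 - p 0 1 * p 1 0 = R ^ 2 * Real.sin θ1 := by
    rw [hp0 0, hp1 0, hp0 1, hp1 1, hφ0, hφ1, Real.cos_zero, Real.sin_zero]
    ring
  have hX12 : p 1 0 * p 2 1 - p 1 1 * p 2 0 = R ^ 2 * Real.sin θ2 := by
    rw [hp0 1, hp1 1, hp0 2, hp1 2, hφ1, hφ2]
    have h' := Real.sin_sub (θ1 + θ2) θ1
    rw [show θ1 + θ2 - θ1 = θ2 by ring] at h'
    linear_combination (-(R ^ 2)) * h'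
  have hX20 : p 2 0 * p 0 1 - p 2 1 * p 0 0 = R ^ 2 * Real.sin θ3 := by
    rw [hp0 2, hp1 2, hp0 0, hp1 0, hφ0, hφ2, Real.cos_zero, Real.sin_zero, hsum23,
      Real.sin_two_pi_sub]
    ring
  have hD01 : (p 1 0 - p 0 0) ^ 2 + (p 1 1 - p 0 1) ^ 2 = R ^ 2 * (2 - 2 * Real.cos θ1) := by
    rw [hp0 0, hp1 0, hp0 1, hp1 1, hφ0, hφ1, Real.cos_zero, Real.sin_zero]
    have hsc := Real.sin_sq_add_cos_sq θ1
    linear_combination (R ^ 2) * hsc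
  have hD12 : (p 2 0 - p 1 0) ^ 2 + (p 2 1 - p 1 1) ^ 2 = R ^ 2 * (2 - 2 * Real.cos θ2) := by
    rw [hp0 1, hp1 1, hp0 2, hp1 2, hφ1, hφ2]
    have h' := Real.cos_sub (θ1 + θ2) θ1
    rw [show θ1 + θ2 - θ1 = θ2 by ring] at h'
    have hsc1 := Real.sin_sq_add_cos_sq (θ1 + θ2)
    have hsc2 := Real.sin_sq_add_cos_sq θ1
    linear_combination (R ^ 2) * hsc1 + (R ^ 2) * hsc2 + 2 * R ^ 2 * h'
  have hD20 : (p 0 0 - p 2 0) ^ 2 + (p 0 1 - p 2 1) ^ 2 = R ^ 2 * (2 - 2 * Real.cos θ3) := by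
    rw [hp0 2, hp1 2, hp0 0, hp1 0, hφ0, hφ2, Real.cos_zero, Real.sin_zero, hsum23,
      Real.cos_two_pi_sub, Real.sin_two_pi_sub]
    linear_combination (R ^ 2) * Real.sin_sq_add_cos_sq θ3
  -- the quantities Q per pair
  have hQgen : ∀ θ c : ℝ, Real.cos θ = (c + S) / Real.cosh d ^ 2 → -1 < c →
      1 < R ^ 2 * (1 + Real.cos θ) / 2 := by
    intro θ c hcθ hc
    have he : R ^ 2 * (1 + Real.cos θ) / 2 = (1 + c + 2 * S) / (2 * S) := by
      rw [hcθ, hRsq, hC2]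
      field_simp
      ring
    rw [he, lt_div_iff₀ (by positivity)]
    linarith
  have hQ1 := hQgen θ1 c1 hcosθ1 hb1.1
  have hQ2 := hQgen θ2 c2 hcosθ2 hb2.1
  have hQ3 := hQgen θ3 c3 hcosθ3 hb3.1
  have hXQ1 : (R ^ 2 * Real.sin θ1) ^ 2 =
      (R ^ 2 * (1 + Real.cos θ1) / 2) * (R ^ 2 * (2 - 2 * Real.cos θ1)) := by
    have hs := Real.sin_sq θ1
    linear_combination (R ^ 4) * hs
  have hXQ2 : (R ^ 2 * Real.sin θ2) ^ 2 =
      (R ^ 2 * (1 + Real.cos θ2) / 2) * (R ^ 2 * (2 - 2 * Real.cos θ2)) := by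
    have hs := Real.sin_sq θ2
    linear_combination (R ^ 4) * hs
  have hXQ3 : (R ^ 2 * Real.sin θ3) ^ 2 =
      (R ^ 2 * (1 + Real.cos θ3) / 2) * (R ^ 2 * (2 - 2 * Real.cos θ3)) := by
    have hs := Real.sin_sq θ3
    linear_combination (R ^ 4) * hs
  set Qm := min (R ^ 2 * (1 + Real.cos θ1) / 2)
    (min (R ^ 2 * (1 + Real.cos θ2) / 2) (R ^ 2 * (1 + Real.cos θ3) / 2)) with hQmdef
  have hQm1 : 1 < Qm := lt_min hQ1 (lt_min hQ2 hQ3)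
  set ρ := Real.sqrt Qm with hρdef
  have hρ1 : 1 < ρ := by
    rw [hρdef]
    exact (Real.lt_sqrt (by norm_num)).mpr (by simpa using hQm1)
  have hρsq : ρ ^ 2 = Qm := Real.sq_sqrt (by linarith)
  have hball : Metric.ball (0 : EuclideanSpace ℝ (Fin 2)) ρ ⊆ convexHull ℝ (Set.range p) := by
    intro x hx
    rw [mem_ball_zero_iff] at hx
    have hxsq : x 0 ^ 2 + x 1 ^ 2 < Qm := by
      have h' : ‖x‖ ^ 2 < ρ ^ 2 := by
        exact pow_lt_pow_left₀ hx (norm_nonneg x) (by norm_num)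
      rw [normsq] at h'
      rw [← hρsq]
      exact h'
    apply mem_hull
    · -- pair (1,2)
      have e : (p 1 0 - x 0) * (p 2 1 - x 1) - (p 1 1 - x 1) * (p 2 0 - x 0) =
          (p 1 0 * p 2 1 - p 1 1 * p 2 0) +
            ((p 2 0 - p 1 0) * x 1 - (p 2 1 - p 1 1) * x 0) := by ring
      rw [e, hX12]
      exact side_pos (mul_pos (pow_pos hRpos 2) hsinθ2) hXQ2
        (le_trans (min_le_right _ _) (min_le_left _ _)) hxsq hD12.symm
    · -- pair (2,0)
      have e : (p 2 0 - x 0) * (p 0 1 - x 1) - (p 2 1 - x 1) * (p 0 0 - x 0) =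
          (p 2 0 * p 0 1 - p 2 1 * p 0 0) +
            ((p 0 0 - p 2 0) * x 1 - (p 0 1 - p 2 1) * x 0) := by ring
      rw [e, hX20]
      exact side_pos (mul_pos (pow_pos hRpos 2) hsinθ3) hXQ3
        (le_trans (min_le_right _ _) (min_le_right _ _)) hxsq hD20.symm
    · -- pair (0,1)
      have e : (p 0 0 - x 0) * (p 1 1 - x 1) - (p 0 1 - x 1) * (p 1 0 - x 0) =
          (p 0 0 * p 1 1 - p 0 1 * p 1 0) +
            ((p 1 0 - p 0 0) * x 1 - (p 1 1 - p 0 1) * x 0) := by ring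
      rw [e, hX01]
      exact side_pos (mul_pos (pow_pos hRpos 2) hsinθ1) hXQ1 (min_le_left _ _) hxsq hD01.symm
  refine ⟨v, ⟨fun i => ⟨hdiag i, hv0pos i⟩, ?_⟩, hsl1, hsl2, hsl3⟩
  have hrange : (Set.range fun i => dsProj (v i)) = Set.range p := by rw [hpdef]
  rw [hrange]
  intro y hy
  have h1' : y ∈ Metric.ball (0 : EuclideanSpace ℝ (Fin 2)) ρ := by
    rw [mem_ball_zero_iff]
    rw [mem_closedBall_zero_iff] at hy
    linarith
  exact interior_maximal hball Metric.isOpen_ball h1'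

open Matrix in
/-- Part 2, uniqueness. -/
private lemma uniq (v w : Fin 3 → Fin 3 → ℝ) (hv : IsSpacelikeTriangle v)
    (hw : IsSpacelikeTriangle w)
    (e1 : sLen (v 0) (v 1) = sLen (w 0) (w 1)) (e2 : sLen (v 1) (v 2) = sLen (w 1) (w 2))
    (e3 : sLen (v 0) (v 2) = sLen (w 0) (w 2)) :
    ∃ g : (Fin 3 → ℝ) →ₗ[ℝ] (Fin 3 → ℝ),
      (∀ x y, mink (g x) (g y) = mink x y) ∧ ∀ i, g (v i) = w i := by
  obtain ⟨⟨hv01, hv12, hv02⟩, -, hΔv⟩ := master v hv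
  obtain ⟨⟨hw01, hw12, hw02⟩, -, -⟩ := master w hw
  have cosS : ∀ x y : Fin 3 → ℝ, (mink x y) ^ 2 < 1 → Real.cos (sLen x y) = mink x y :=
    fun x y h => Real.cos_arccos (by nlinarith) (by nlinarith)
  have g01 : mink (v 0) (v 1) = mink (w 0) (w 1) := by
    rw [← cosS _ _ hv01, ← cosS _ _ hw01, e1]
  have g12 : mink (v 1) (v 2) = mink (w 1) (w 2) := by
    rw [← cosS _ _ hv12, ← cosS _ _ hw12, e2]
  have g02 : mink (v 0) (v 2) = mink (w 0) (w 2) := by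
    rw [← cosS _ _ hv02, ← cosS _ _ hw02, e3]
  have hvd : ∀ i, mink (v i) (v i) = 1 := fun i => (hv.1 i).1
  have hwd : ∀ i, mink (w i) (w i) = 1 := fun i => (hw.1 i).1
  have mink_comm : ∀ x y : Fin 3 → ℝ, mink x y = mink y x := by
    intro x y; unfold mink; ring
  have hGram : ∀ a b : Fin 3,
      -(v a 0 * v b 0) + v a 1 * v b 1 + v a 2 * v b 2 =
      -(w a 0 * w b 0) + w a 1 * w b 1 + w a 2 * w b 2 := by
    have key : ∀ a b : Fin 3, mink (v a) (v b) = mink (w a) (w b) → 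
        -(v a 0 * v b 0) + v a 1 * v b 1 + v a 2 * v b 2 =
        -(w a 0 * w b 0) + w a 1 * w b 1 + w a 2 * w b 2 := fun a b h => h
    intro a b
    fin_cases a <;> fin_cases b
    · exact key 0 0 (by rw [hvd 0, hwd 0])
    · exact key 0 1 g01
    · exact key 0 2 g02
    · exact key 1 0 (by rw [mink_comm (v 1) (v 0), mink_comm (w 1) (w 0)]; exact g01)
    · exact key 1 1 (by rw [hvd 1, hwd 1])
    · exact key 1 2 g12
    · exact key 2 0 (by rw [mink_comm (v 2) (v 0), mink_comm (w 2) (w 0)]; exact g02)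
    · exact key 2 1 (by rw [mink_comm (v 2) (v 1), mink_comm (w 2) (w 1)]; exact g12)
    · exact key 2 2 (by rw [hvd 2, hwd 2])
  set M : Matrix (Fin 3) (Fin 3) ℝ := Matrix.of fun k i => v i k with hM
  set N : Matrix (Fin 3) (Fin 3) ℝ := Matrix.of fun k i => w i k with hN
  set η : Matrix (Fin 3) (Fin 3) ℝ := Matrix.of ![![-1, 0, 0], ![0, 1, 0], ![0, 0, 1]] with hη
  have hη00 : η 0 0 = -1 := rfl
  have hη01 : η 0 1 = 0 := rfl
  have hη02 : η 0 2 = 0 := rfl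
  have hη10 : η 1 0 = 0 := rfl
  have hη11 : η 1 1 = 1 := rfl
  have hη12 : η 1 2 = 0 := rfl
  have hη20 : η 2 0 = 0 := rfl
  have hη21 : η 2 1 = 0 := rfl
  have hη22 : η 2 2 = 1 := rfl
  have hMent : ∀ k i, M k i = v i k := fun k i => rfl
  have hNent : ∀ k i, N k i = w i k := fun k i => rfl
  have hMη : Mᵀ * η * M = Nᵀ * η * N := by
    ext a b
    simp only [Matrix.mul_apply, Fin.sum_univ_three, Matrix.transpose_apply, hMent, hNent,
      hη00, hη01, hη02, hη10, hη11, hη12, hη20, hη21, hη22]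
    linear_combination hGram a b
  have ht : ∀ i, 0 < v i 0 := fun i => (hv.1 i).2
  have hdetM : M.det ≠ 0 := by
    intro hdet
    obtain ⟨x, hx0, hxv⟩ := Matrix.exists_mulVec_eq_zero_iff.mpr hdet
    have hcomp : ∀ k : Fin 3, v 0 k * x 0 + v 1 k * x 1 + v 2 k * x 2 = 0 := by
      intro k
      have h := congrFun hxv k
      simp only [Matrix.mulVec, dotProduct, Fin.sum_univ_three, hMent, Pi.zero_apply] at h
      linarith [h]
    have hpv : ∀ i : Fin 3, v i 0 * dsProj (v i) 0 = v i 1 := by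
      intro i
      show v i 0 * (v i 1 / v i 0) = v i 1
      rw [mul_comm]
      exact div_mul_cancel₀ _ (ne_of_gt (ht i))
    have hpv' : ∀ i : Fin 3, v i 0 * dsProj (v i) 1 = v i 2 := by
      intro i
      show v i 0 * (v i 2 / v i 0) = v i 2
      rw [mul_comm]
      exact div_mul_cancel₀ _ (ne_of_gt (ht i))
    have hs : x 0 * v 0 0 + x 1 * v 1 0 + x 2 * v 2 0 = 0 := by linarith [hcomp 0]
    have hsp0 : x 0 * v 0 0 * dsProj (v 0) 0 + x 1 * v 1 0 * dsProj (v 1) 0 +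
        x 2 * v 2 0 * dsProj (v 2) 0 = 0 := by
      rw [mul_assoc, mul_assoc, mul_assoc, hpv 0, hpv 1, hpv 2]
      linarith [hcomp 1]
    have hsp1 : x 0 * v 0 0 * dsProj (v 0) 1 + x 1 * v 1 0 * dsProj (v 1) 1 +
        x 2 * v 2 0 * dsProj (v 2) 1 = 0 := by
      rw [mul_assoc, mul_assoc, mul_assoc, hpv' 0, hpv' 1, hpv' 2]
      linarith [hcomp 2]
    have h1 : (x 1 * v 1 0) * ((dsProj (v 1) 0 - dsProj (v 0) 0) *
        (dsProj (v 2) 1 - dsProj (v 0) 1) -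
        (dsProj (v 1) 1 - dsProj (v 0) 1) * (dsProj (v 2) 0 - dsProj (v 0) 0)) = 0 := by
      linear_combination (dsProj (v 2) 1 - dsProj (v 0) 1) * hsp0 -
        (dsProj (v 2) 0 - dsProj (v 0) 0) * hsp1 +
        (dsProj (v 0) 1 * (dsProj (v 2) 0 - dsProj (v 0) 0) -
          dsProj (v 0) 0 * (dsProj (v 2) 1 - dsProj (v 0) 1)) * hs
    have h2 : (x 2 * v 2 0) * ((dsProj (v 1) 0 - dsProj (v 0) 0) *
        (dsProj (v 2) 1 - dsProj (v 0) 1) -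
        (dsProj (v 1) 1 - dsProj (v 0) 1) * (dsProj (v 2) 0 - dsProj (v 0) 0)) = 0 := by
      linear_combination (dsProj (v 1) 0 - dsProj (v 0) 0) * hsp1 -
        (dsProj (v 1) 1 - dsProj (v 0) 1) * hsp0 +
        (dsProj (v 0) 0 * (dsProj (v 1) 1 - dsProj (v 0) 1) -
          dsProj (v 0) 1 * (dsProj (v 1) 0 - dsProj (v 0) 0)) * hs
    have hx1 : x 1 = 0 := by
      rcases mul_eq_zero.mp h1 with h | h
      · rcases mul_eq_zero.mp h with h' | h'
        · exact h'
        · exact absurd h' (ne_of_gt (ht 1))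
      · exact absurd h hΔv
    have hx2 : x 2 = 0 := by
      rcases mul_eq_zero.mp h2 with h | h
      · rcases mul_eq_zero.mp h with h' | h'
        · exact h'
        · exact absurd h' (ne_of_gt (ht 2))
      · exact absurd h hΔv
    have hx00 : x 0 = 0 := by
      rw [hx1, hx2] at hs
      have : x 0 * v 0 0 = 0 := by linarith
      rcases mul_eq_zero.mp this with h' | h'
      · exact h'
      · exact absurd h' (ne_of_gt (ht 0))
    apply hx0
    funext i
    fin_cases i
    · exact hx00
    · exact hx1
    · exact hx2
  have hMunit : IsUnit M.det := isUnit_iff_ne_zero.mpr hdetM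
  set P := N * M⁻¹ with hP
  have hPη : Pᵀ * η * P = η := by
    have h1 : Pᵀ * η * P = M⁻¹ᵀ * (Nᵀ * η * N) * M⁻¹ := by
      rw [hP, Matrix.transpose_mul]
      simp only [Matrix.mul_assoc]
    rw [h1, ← hMη]
    have h2 : M⁻¹ᵀ * (Mᵀ * η * M) * M⁻¹ = (M⁻¹ᵀ * Mᵀ) * η * (M * M⁻¹) := by
      simp only [Matrix.mul_assoc]
    rw [h2, ← Matrix.transpose_mul, Matrix.mul_nonsing_inv _ hMunit, Matrix.transpose_one,
      Matrix.one_mul, Matrix.mul_one]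
  have hPe : ∀ a b : Fin 3, -(P 0 a * P 0 b) + P 1 a * P 1 b + P 2 a * P 2 b = η a b := by
    intro a b
    have h := congrFun (congrFun hPη a) b
    simp only [Matrix.mul_apply, Fin.sum_univ_three, Matrix.transpose_apply,
      hη00, hη01, hη02, hη10, hη11, hη12, hη20, hη21, hη22] at h
    linear_combination h
  have hP00 := hPe 0 0
  have hP01 := hPe 0 1
  have hP02 := hPe 0 2
  have hP11 := hPe 1 1
  have hP12 := hPe 1 2
  have hP22 := hPe 2 2
  rw [hη00] at hP00
  rw [hη01] at hP01
  rw [hη02] at hP02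
  rw [hη11] at hP11
  rw [hη12] at hP12
  rw [hη22] at hP22
  refine ⟨Matrix.toLin' P, ?_, ?_⟩
  · intro x y
    rw [Matrix.toLin'_apply, Matrix.toLin'_apply]
    show mink (P.mulVec x) (P.mulVec y) = mink x y
    unfold mink
    simp only [Matrix.mulVec, dotProduct, Fin.sum_univ_three]
    linear_combination (x 0 * y 0) * hP00 + (x 1 * y 1) * hP11 + (x 2 * y 2) * hP22 +
      (x 0 * y 1 + x 1 * y 0) * hP01 + (x 0 * y 2 + x 2 * y 0) * hP02 +
      (x 1 * y 2 + x 2 * y 1) * hP12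
  · intro i
    have hviM : M.mulVec (Pi.single i 1) = v i := by
      funext k
      simp only [Matrix.mulVec, dotProduct, Fin.sum_univ_three, hMent, Pi.single_apply]
      fin_cases i <;> simp
    have hstep : Matrix.toLin' P (v i) = (P * M).mulVec (Pi.single i 1) := by
      rw [Matrix.toLin'_apply, ← hviM, Matrix.mulVec_mulVec]
    rw [hstep, hP, Matrix.mul_assoc, Matrix.nonsing_inv_mul _ hMunit, Matrix.mul_one]
    funext k
    simp only [Matrix.mulVec, dotProduct, Fin.sum_univ_three, hNent, Pi.single_apply]
    fin_cases i <;> simp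

theorem stmt_6 :
    (∀ v, IsSpacelikeTriangle v →
      2 * Real.pi < sLen (v 0) (v 1) + sLen (v 1) (v 2) + sLen (v 0) (v 2)) ∧
    (∀ l₁ l₂ l₃ : ℝ, l₁ ∈ Set.Ioo 0 Real.pi → l₂ ∈ Set.Ioo 0 Real.pi →
      l₃ ∈ Set.Ioo 0 Real.pi → 2 * Real.pi < l₁ + l₂ + l₃ →
      (∃ v, IsSpacelikeTriangle v ∧
        sLen (v 0) (v 1) = l₁ ∧ sLen (v 1) (v 2) = l₂ ∧ sLen (v 0) (v 2) = l₃) ∧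
      (∀ v w, IsSpacelikeTriangle v → IsSpacelikeTriangle w →
        sLen (v 0) (v 1) = l₁ → sLen (v 1) (v 2) = l₂ → sLen (v 0) (v 2) = l₃ →
        sLen (w 0) (w 1) = l₁ → sLen (w 1) (w 2) = l₂ → sLen (w 0) (w 2) = l₃ →
        ∃ g : (Fin 3 → ℝ) →ₗ[ℝ] (Fin 3 → ℝ),
          (∀ x y, mink (g x) (g y) = mink x y) ∧ ∀ i, g (v i) = w i)) := by
  constructor
  · exact part1
  · intro l₁ l₂ l₃ h1 h2 h3 hsum
    refine ⟨existence l₁ l₂ l₃ h1 h2 h3 hsum, ?_⟩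
    intro v w hv hw hv1 hv2 hv3 hw1 hw2 hw3
    exact uniq v w hv hw (hv1.trans hw1.symm) (hv2.trans hw2.symm) (hv3.trans hw3.symm)
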